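/- Let $\mathfrak{q}$ be a finite-dimensional complex Lie algebra with Poisson bracket on $S(\mathfrak{q})$ extending the Lie bracket (the Lie–Poisson structure). If $P, Q \in S(\mathfrak{q})^{\mathfrak{q}}$ are invariant polynomials and $\chi \in \mathfrak{q}^*$, then for all $i, j \geq 0$ the shifted elements $D_\chi^i P$ and $D_\chi^j Q$ Poisson-commute: $\{D_\chi^i P, D_\chi^j Q\} = 0$. Consequently, the Mishchenko–Fomenko subalgebra $\bar{\mathcal{A}}_\chi \subseteq S(\mathfrak{q})$ generated by all $\chi$-shifts $D_\chi^i P$ of invariants $P$ is Poisson-commutative. -/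

import Mathlib

open MvPolynomial

namespace MFShift
set_option linter.unusedSectionVars false

variable {ι : Type*} [Fintype ι] [DecidableEq ι]

lemma pderiv_comm (i j : ι) (F : MvPolynomial ι ℂ) :
    pderiv i (pderiv j F) = pderiv j (pderiv i F) := by
  induction F using MvPolynomial.induction_on with
  | C a => simp
  | add p q hp hq => simp [hp, hq]
  | mul_X p k hp =>
    have pX : ∀ l k : ι, pderiv l (X k : MvPolynomial ι ℂ) = if k = l then 1 else 0 := by
      intro l k; split <;> simp [pderiv_X_of_ne, *]
    simp only [pderiv_mul, map_add, pX]
    split_ifs <;> simp [hp] <;> ring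

/-- The constant-coefficient ("frozen-argument") bracket. -/
noncomputable def Bw (w : ι → ι → ℂ) (F G : MvPolynomial ι ℂ) : MvPolynomial ι ℂ :=
  ∑ i, ∑ j, w i j • (pderiv i F * pderiv j G)

section basic
variable (br : MvPolynomial ι ℂ → MvPolynomial ι ℂ → MvPolynomial ι ℂ)
  (hbr_add_left : ∀ F G H, br (F + G) H = br F H + br G H)
  (hbr_smul_left : ∀ (c : ℂ) F G, br (c • F) G = c • br F G)
  (hbr_skew : ∀ F G, br F G = - br G F)
  (hbr_leibniz : ∀ F G H, br F (G * H) = br F G * H + G * br F H)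

include hbr_leibniz in
lemma br_one_right (F : MvPolynomial ι ℂ) : br F 1 = 0 := by
  have h := hbr_leibniz F 1 1
  simp only [mul_one, one_mul] at h
  exact (left_eq_add.mp h)

include hbr_skew hbr_smul_left in
lemma br_smul_right (a : ℂ) (F G : MvPolynomial ι ℂ) : br F (a • G) = a • br F G := by
  rw [hbr_skew, hbr_smul_left, hbr_skew F G]; simp

include hbr_skew hbr_add_left in
lemma br_add_right (F G H : MvPolynomial ι ℂ) : br F (G + H) = br F G + br F H := by
  rw [hbr_skew, hbr_add_left, hbr_skew G F, hbr_skew H F]; abel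

include hbr_skew hbr_smul_left hbr_leibniz in
lemma br_C_right (a : ℂ) (F : MvPolynomial ι ℂ) : br F (C a) = 0 := by
  have : (C a : MvPolynomial ι ℂ) = a • 1 := by simp [smul_eq_C_mul]
  rw [this, br_smul_right br hbr_smul_left hbr_skew, br_one_right br hbr_leibniz, smul_zero]

include hbr_skew hbr_smul_left hbr_leibniz in
lemma br_C_left (a : ℂ) (F : MvPolynomial ι ℂ) : br (C a) F = 0 := by
  rw [hbr_skew, br_C_right br hbr_smul_left hbr_skew hbr_leibniz, neg_zero]

include hbr_skew hbr_leibniz in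
lemma br_mul_left (F G H : MvPolynomial ι ℂ) :
    br (F * G) H = br F H * G + F * br G H := by
  rw [hbr_skew, hbr_leibniz, hbr_skew H F, hbr_skew H G]; ring

include hbr_add_left hbr_smul_left hbr_skew hbr_leibniz in
lemma br_eq_sum (F G : MvPolynomial ι ℂ) :
    br F G = ∑ i, pderiv i F * br (X i) G := by
  induction F using MvPolynomial.induction_on with
  | C a => simp [br_C_left br hbr_smul_left hbr_skew hbr_leibniz]
  | add p q hp hq => rw [hbr_add_left, hp, hq, ← Finset.sum_add_distrib]; simp [add_mul]
  | mul_X p k hp =>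
    rw [br_mul_left br hbr_skew hbr_leibniz, hp]
    have hsum : ∑ i, (pderiv i (X k) : MvPolynomial ι ℂ) * br (X i) G = br (X k) G := by
      rw [Finset.sum_eq_single k]
      · simp
      · intro i _ hik; rw [pderiv_X_of_ne (Ne.symm hik), zero_mul]
      · intro h; exact absurd (Finset.mem_univ k) h
    have : ∑ i, pderiv i (p * X k) * br (X i) G
        = (∑ i, pderiv i p * br (X i) G) * X k
          + p * ∑ i, (pderiv i (X k) : MvPolynomial ι ℂ) * br (X i) G := by
      rw [Finset.sum_mul, Finset.mul_sum, ← Finset.sum_add_distrib]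
      refine Finset.sum_congr rfl fun i _ => ?_
      rw [pderiv_mul]; ring
    rw [this, hsum]

include hbr_add_left hbr_smul_left hbr_skew hbr_leibniz in
lemma br_eq_sum_right (F G : MvPolynomial ι ℂ) :
    br F G = ∑ j, pderiv j G * br F (X j) := by
  rw [hbr_skew, br_eq_sum br hbr_add_left hbr_smul_left hbr_skew hbr_leibniz,
    neg_eq_iff_eq_neg, ← Finset.sum_neg_distrib]
  refine Finset.sum_congr rfl fun j _ => ?_
  rw [hbr_skew (X j) F]; ring

include hbr_add_left hbr_smul_left hbr_skew hbr_leibniz in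
lemma br_inv_left {P : MvPolynomial ι ℂ} (hP : ∀ i, br (X i) P = 0) (F : MvPolynomial ι ℂ) :
    br P F = 0 := by
  rw [hbr_skew, br_eq_sum br hbr_add_left hbr_smul_left hbr_skew hbr_leibniz]
  simp [hP]

end basic

section deriv
variable (Dχ : MvPolynomial ι ℂ → MvPolynomial ι ℂ) (c : ι → ℂ)
  (hD : ∀ F, Dχ F = ∑ i, c i • pderiv i F)

include hD in
lemma D_add (F G : MvPolynomial ι ℂ) : Dχ (F + G) = Dχ F + Dχ G := by
  simp [hD, smul_add, Finset.sum_add_distrib]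

include hD in
lemma D_smul (a : ℂ) (F : MvPolynomial ι ℂ) : Dχ (a • F) = a • Dχ F := by
  simp [hD, Finset.smul_sum, smul_comm a]

include hD in
lemma D_mul (F G : MvPolynomial ι ℂ) : Dχ (F * G) = Dχ F * G + F * Dχ G := by
  simp only [hD, pderiv_mul, smul_add, Finset.sum_add_distrib, Finset.sum_mul, Finset.mul_sum,
    smul_mul_assoc, mul_smul_comm]

include hD in
lemma D_pderiv (j : ι) (F : MvPolynomial ι ℂ) : Dχ (pderiv j F) = pderiv j (Dχ F) := by
  simp only [hD, map_sum]
  refine Finset.sum_congr rfl fun i _ => ?_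
  rw [Derivation.map_smul, pderiv_comm]

include hD in
lemma D_sum {α : Type*} (s : Finset α) (f : α → MvPolynomial ι ℂ) :
    Dχ (∑ x ∈ s, f x) = ∑ x ∈ s, Dχ (f x) := by
  classical
  induction s using Finset.induction with
  | empty => simp [hD]
  | insert x s hx ih => rw [Finset.sum_insert hx, D_add Dχ c hD, ih, Finset.sum_insert hx]

lemma Bw_skew {w : ι → ι → ℂ} (hw : ∀ i j, w j i = - w i j) (F G : MvPolynomial ι ℂ) :
    Bw w G F = - Bw w F G := by
  unfold Bw
  rw [Finset.sum_comm, ← Finset.sum_neg_distrib]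
  refine Finset.sum_congr rfl fun i _ => ?_
  rw [← Finset.sum_neg_distrib]
  refine Finset.sum_congr rfl fun j _ => ?_
  rw [hw i j, mul_comm]; module

include hD in
lemma D_Bw (w : ι → ι → ℂ) (F G : MvPolynomial ι ℂ) :
    Dχ (Bw w F G) = Bw w (Dχ F) G + Bw w F (Dχ G) := by
  unfold Bw
  rw [show (∑ i, ∑ j, w i j • (pderiv i (Dχ F) * pderiv j G))
        + ∑ i, ∑ j, w i j • (pderiv i F * pderiv j (Dχ G))
      = ∑ i, ∑ j, (w i j • (pderiv i (Dχ F) * pderiv j G)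
        + w i j • (pderiv i F * pderiv j (Dχ G))) by
    rw [← Finset.sum_add_distrib]
    exact Finset.sum_congr rfl fun i _ => (Finset.sum_add_distrib).symm]
  rw [show Dχ (∑ i, ∑ j, w i j • (pderiv i F * pderiv j G))
      = ∑ i, ∑ j, Dχ (w i j • (pderiv i F * pderiv j G)) by
    rw [D_sum Dχ c hD]
    exact Finset.sum_congr rfl fun i _ => D_sum Dχ c hD _ _]
  refine Finset.sum_congr rfl fun i _ => Finset.sum_congr rfl fun j _ => ?_
  rw [D_smul Dχ c hD, D_mul Dχ c hD, D_pderiv Dχ c hD, D_pderiv Dχ c hD, smul_add]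

end deriv

section main
variable (br : MvPolynomial ι ℂ → MvPolynomial ι ℂ → MvPolynomial ι ℂ)
  (Dχ : MvPolynomial ι ℂ → MvPolynomial ι ℂ) (c : ι → ℂ) (w : ι → ι → ℂ) (r : ι → ι → ι → ℂ)
  (hD : ∀ F, Dχ F = ∑ i, c i • pderiv i F)
  (hbr_add_left : ∀ F G H, br (F + G) H = br F H + br G H)
  (hbr_smul_left : ∀ (c : ℂ) F G, br (c • F) G = c • br F G)
  (hbr_skew : ∀ F G, br F G = - br G F)
  (hbr_leibniz : ∀ F G H, br F (G * H) = br F G * H + G * br F H)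
  (hgen : ∀ i j, br (X i) (X j) = ∑ k, r i j k • (X k : MvPolynomial ι ℂ))
  (hw : ∀ i j, w i j = ∑ k, r i j k * c k)

include hD hbr_add_left hbr_smul_left hbr_skew hbr_leibniz hgen hw in
lemma F1 (F G : MvPolynomial ι ℂ) :
    Dχ (br F G) = br (Dχ F) G + br F (Dχ G) + Bw w F G := by
  have hsum := br_eq_sum br hbr_add_left hbr_smul_left hbr_skew hbr_leibniz
  have hsumr := br_eq_sum_right br hbr_add_left hbr_smul_left hbr_skew hbr_leibniz
  have full : ∀ F G : MvPolynomial ι ℂ,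
      br F G = ∑ i, ∑ j, pderiv i F * (pderiv j G * (∑ k, r i j k • (X k : MvPolynomial ι ℂ))) := by
    intro F G
    rw [hsum F G]
    refine Finset.sum_congr rfl fun i _ => ?_
    rw [hsumr (X i) G, Finset.mul_sum]
    refine Finset.sum_congr rfl fun j _ => ?_
    rw [hgen i j]
  have DX : ∀ k, Dχ (X k : MvPolynomial ι ℂ) = C (c k) := by
    intro k
    rw [hD, Finset.sum_eq_single k]
    · simp [smul_eq_C_mul]
    · intro i _ hik; rw [pderiv_X_of_ne (Ne.symm hik), smul_zero]
    · intro h; exact absurd (Finset.mem_univ k) h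
  have DL : ∀ i j, Dχ (∑ k, r i j k • (X k : MvPolynomial ι ℂ)) = C (w i j) := by
    intro i j
    rw [D_sum Dχ c hD, hw i j, map_sum]
    refine Finset.sum_congr rfl fun k _ => ?_
    rw [D_smul Dχ c hD, DX, smul_eq_C_mul, ← C_mul]
  have term : ∀ (i j : ι), Dχ (pderiv i F * (pderiv j G * (∑ k, r i j k • (X k : MvPolynomial ι ℂ))))
      = pderiv i (Dχ F) * (pderiv j G * (∑ k, r i j k • (X k : MvPolynomial ι ℂ)))
        + pderiv i F * (pderiv j (Dχ G) * (∑ k, r i j k • (X k : MvPolynomial ι ℂ)))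
        + w i j • (pderiv i F * pderiv j G) := by
    intro i j
    rw [D_mul Dχ c hD, D_mul Dχ c hD, DL, D_pderiv Dχ c hD, D_pderiv Dχ c hD, smul_eq_C_mul]
    ring
  calc Dχ (br F G)
      = ∑ i, ∑ j, Dχ (pderiv i F * (pderiv j G * (∑ k, r i j k • (X k : MvPolynomial ι ℂ)))) := by
        rw [full F G, D_sum Dχ c hD]
        exact Finset.sum_congr rfl fun i _ => D_sum Dχ c hD _ _
    _ = ∑ i, ∑ j, (pderiv i (Dχ F) * (pderiv j G * (∑ k, r i j k • (X k : MvPolynomial ι ℂ)))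
        + pderiv i F * (pderiv j (Dχ G) * (∑ k, r i j k • (X k : MvPolynomial ι ℂ)))
        + w i j • (pderiv i F * pderiv j G)) :=
        Finset.sum_congr rfl fun i _ => Finset.sum_congr rfl fun j _ => term i j
    _ = br (Dχ F) G + br F (Dχ G) + Bw w F G := by
        simp only [Finset.sum_add_distrib]
        rw [← full (Dχ F) G, ← full F (Dχ G)]
        rfl

include hD hbr_add_left hbr_smul_left hbr_skew hbr_leibniz hgen hw in
lemma shift {P : MvPolynomial ι ℂ} (hP : ∀ i, br (X i) P = 0) :
    ∀ (m : ℕ) (F : MvPolynomial ι ℂ),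
      br (Dχ^[m] P) F = -(m : ℂ) • Bw w (Dχ^[m - 1] P) F := by
  intro m
  induction m with
  | zero =>
    intro F
    simp [br_inv_left br hbr_add_left hbr_smul_left hbr_skew hbr_leibniz hP]
  | succ m IH =>
    intro F
    have h1 := congrArg Dχ (IH F)
    rw [F1 br Dχ c w r hD hbr_add_left hbr_smul_left hbr_skew hbr_leibniz hgen hw,
      D_smul Dχ c hD, D_Bw Dχ c hD, IH (Dχ F)] at h1
    have h2 : (m : ℂ) • Bw w (Dχ (Dχ^[m - 1] P)) F = (m : ℂ) • Bw w (Dχ^[m] P) F := by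
      cases m with
      | zero => simp
      | succ n =>
        rw [show (n + 1 : ℕ) - 1 = n from rfl, ← Function.iterate_succ_apply' Dχ n P]
    rw [Function.iterate_succ_apply', show (m + 1 : ℕ) - 1 = m from rfl]
    simp only [smul_eq_C_mul, Nat.cast_add, Nat.cast_one, map_add, map_one, map_neg] at h1 h2 ⊢
    linear_combination h1 - h2

include hD hbr_add_left hbr_smul_left hbr_skew hbr_leibniz hgen hw in
lemma shift_right {Q : MvPolynomial ι ℂ} (hwskew : ∀ i j, w j i = - w i j)
    (hQ : ∀ i, br (X i) Q = 0) (n : ℕ) (F : MvPolynomial ι ℂ) :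
    br F (Dχ^[n] Q) = -(n : ℂ) • Bw w F (Dχ^[n - 1] Q) := by
  rw [hbr_skew, shift br Dχ c w r hD hbr_add_left hbr_smul_left hbr_skew hbr_leibniz hgen hw hQ,
    Bw_skew hwskew]
  module

include hD hbr_add_left hbr_smul_left hbr_skew hbr_leibniz hgen hw in
lemma key {P Q : MvPolynomial ι ℂ} (hwskew : ∀ i j, w j i = - w i j)
    (hP : ∀ i, br (X i) P = 0) (hQ : ∀ i, br (X i) Q = 0) :
    ∀ m n : ℕ, br (Dχ^[m] P) (Dχ^[n] Q) = 0 := by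
  intro m
  induction m with
  | zero =>
    intro n
    exact br_inv_left br hbr_add_left hbr_smul_left hbr_skew hbr_leibniz hP _
  | succ m IH =>
    intro n
    have h1 := shift br Dχ c w r hD hbr_add_left hbr_smul_left hbr_skew hbr_leibniz hgen hw hP
      (m + 1) (Dχ^[n] Q)
    have h2 := shift_right br Dχ c w r hD hbr_add_left hbr_smul_left hbr_skew hbr_leibniz hgen hw
      hwskew hQ (n + 1) (Dχ^[m] P)
    rw [IH (n + 1)] at h2
    rw [show (n + 1 : ℕ) - 1 = n from rfl] at h2
    have hB : Bw w (Dχ^[m] P) (Dχ^[n] Q) = 0 := by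
      have := h2.symm
      rw [neg_smul, neg_eq_zero, smul_eq_zero] at this
      rcases this with h | h
      · exact absurd h (by exact_mod_cast (Nat.cast_add_one_ne_zero n : (n : ℂ) + 1 ≠ 0))
      · exact h
    rw [h1, show (m + 1 : ℕ) - 1 = m from rfl, hB, smul_zero]

end main
end MFShift

open MFShift in
/-- Let `q` be a finite-dimensional complex Lie algebra with basis `b`,
and identify `S(q)` with `MvPolynomial ι ℂ`.  Let `br` be the Lie–Poisson bracket on
`S(q)`: a bilinear, antisymmetric biderivation satisfying `{X i, X j} = ⁅b i, b j⁆`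
(expanded in coordinates).  If `P, Q` are invariant (`{X i, P} = 0` for all `i`) and
`χ ∈ q*`, then all the `χ`-shifts `D_χ^i P` and `D_χ^j Q` Poisson-commute; consequently
the Mishchenko–Fomenko subalgebra generated by all shifts of invariants is
Poisson-commutative. -/
theorem stmt1 {q : Type*} [LieRing q] [LieAlgebra ℂ q] [FiniteDimensional ℂ q]
    {ι : Type*} [Fintype ι] [DecidableEq ι] (b : Module.Basis ι ℂ q)
    (χ : Module.Dual ℂ q)
    (Dχ : MvPolynomial ι ℂ → MvPolynomial ι ℂ)
    (hD : ∀ F, Dχ F = ∑ i, χ (b i) • MvPolynomial.pderiv i F)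
    (br : MvPolynomial ι ℂ → MvPolynomial ι ℂ → MvPolynomial ι ℂ)
    (hbr_add_left : ∀ F G H, br (F + G) H = br F H + br G H)
    (hbr_smul_left : ∀ (c : ℂ) F G, br (c • F) G = c • br F G)
    (hbr_skew : ∀ F G, br F G = - br G F)
    (hbr_leibniz : ∀ F G H, br F (G * H) = br F G * H + G * br F H)
    (hbr_gen : ∀ i j, br (X i) (X j) =
      ∑ k, (b.repr ⁅b i, b j⁆ k) • (X k : MvPolynomial ι ℂ)) :
    (∀ P Q : MvPolynomial ι ℂ,
      (∀ i, br (X i) P = 0) → (∀ i, br (X i) Q = 0) →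
      ∀ m n : ℕ, br (Dχ^[m] P) (Dχ^[n] Q) = 0) ∧
    (∀ F G : MvPolynomial ι ℂ,
      F ∈ Algebra.adjoin ℂ
        {F' | ∃ (P : MvPolynomial ι ℂ) (m : ℕ), (∀ i, br (X i) P = 0) ∧ F' = Dχ^[m] P} →
      G ∈ Algebra.adjoin ℂ
        {F' | ∃ (P : MvPolynomial ι ℂ) (m : ℕ), (∀ i, br (X i) P = 0) ∧ F' = Dχ^[m] P} →
      br F G = 0) := by
  set c : ι → ℂ := fun i => χ (b i) with hc
  set w : ι → ι → ℂ := fun i j => χ ⁅b i, b j⁆ with hwdef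
  set r : ι → ι → ι → ℂ := fun i j k => b.repr ⁅b i, b j⁆ k with hrdef
  have hD' : ∀ F, Dχ F = ∑ i, c i • pderiv i F := hD
  have hgen : ∀ i j, br (X i) (X j) = ∑ k, r i j k • (X k : MvPolynomial ι ℂ) := hbr_gen
  have hw : ∀ i j, w i j = ∑ k, r i j k * c k := by
    intro i j
    have : χ ⁅b i, b j⁆ = χ (∑ k, b.repr ⁅b i, b j⁆ k • b k) := by
      rw [Module.Basis.sum_repr b ⁅b i, b j⁆]
    rw [hwdef, hrdef, hc]
    simp only [this, map_sum, map_smul, smul_eq_mul]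
  have hwskew : ∀ i j, w j i = - w i j := by
    intro i j
    show χ ⁅b j, b i⁆ = - χ ⁅b i, b j⁆
    rw [← lie_skew (b j) (b i), map_neg]
  have key' : ∀ P Q : MvPolynomial ι ℂ,
      (∀ i, br (X i) P = 0) → (∀ i, br (X i) Q = 0) →
      ∀ m n : ℕ, br (Dχ^[m] P) (Dχ^[n] Q) = 0 := fun P Q hP hQ =>
    key br Dχ c w r hD' hbr_add_left hbr_smul_left hbr_skew hbr_leibniz hgen hw hwskew hP hQ
  refine ⟨key', ?_⟩
  intro F G hF hG
  have hCmap : ∀ a : ℂ, algebraMap ℂ (MvPolynomial ι ℂ) a = C a := fun a => rfl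
  refine Algebra.adjoin_induction₂ ?_ ?_ ?_ ?_ ?_ ?_ ?_ ?_ hF hG
  · rintro x y ⟨P, m, hP, rfl⟩ ⟨Q, n, hQ, rfl⟩
    exact key' P Q hP hQ m n
  · intro a₁ a₂
    rw [hCmap]
    exact br_C_left br hbr_smul_left hbr_skew hbr_leibniz _ _
  · intro a x _
    rw [hCmap]
    exact br_C_left br hbr_smul_left hbr_skew hbr_leibniz _ _
  · intro a x _
    rw [hCmap]
    exact br_C_right br hbr_smul_left hbr_skew hbr_leibniz _ _
  · intro x y z _ _ _ h1 h2
    rw [hbr_add_left, h1, h2, add_zero]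
  · intro x y z _ _ _ h1 h2
    rw [br_add_right br hbr_add_left hbr_skew, h1, h2, add_zero]
  · intro x y z _ _ _ h1 h2
    rw [br_mul_left br hbr_skew hbr_leibniz, h1, h2, zero_mul, mul_zero, add_zero]
  · intro x y z _ _ _ h1 h2
    rw [hbr_leibniz, h1, h2, zero_mul, mul_zero, add_zero]
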